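/- Let p ≥ 1 be an integer and v a polynomial of degree at most p with Chebyshev expansion v = Σ_{ℓ=0}^{p} v_ℓ T_ℓ. Then Σ_{ℓ=2}^{p} |v_ℓ| ≤ p⁴ · min{ ‖w‖_{L^∞((−1,1))} : w polynomial of degree ≤ p with w'' = v'' }. -/
import Mathlib
open Polynomial Polynomial.Chebyshev Real

private lemma int_cos_zero (m : ℝ) (hm : m ≠ 0) (hs : Real.sin (m * Real.pi) = 0) :
    ∫ θ in (0:ℝ)..Real.pi, Real.cos (m * θ) = 0 := by
  rw [intervalIntegral.integral_comp_mul_left Real.cos hm, integral_cos]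
  simp [hs]

private lemma cos_orth (k j : ℕ) (hj : 1 ≤ j) :
    ∫ θ in (0:ℝ)..Real.pi, Real.cos (k * θ) * Real.cos (j * θ) =
      if k = j then Real.pi / 2 else 0 := by
  have hid : ∀ θ : ℝ, Real.cos (k * θ) * Real.cos (j * θ)
      = (Real.cos (((k:ℝ) + j) * θ) + Real.cos (((k:ℝ) - j) * θ)) / 2 := by
    intro θ
    rw [show ((k:ℝ)+j)*θ = k*θ + j*θ by ring, show ((k:ℝ)-j)*θ = k*θ - j*θ by ring,
      Real.cos_add, Real.cos_sub]
    ring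
  simp only [hid]
  rw [intervalIntegral.integral_div, intervalIntegral.integral_add
    ((Continuous.intervalIntegrable (by continuity) _ _))
    ((Continuous.intervalIntegrable (by continuity) _ _))]
  have h1 : ∫ θ in (0:ℝ)..Real.pi, Real.cos (((k:ℝ) + j) * θ) = 0 := by
    apply int_cos_zero
    · positivity
    · have := Real.sin_nat_mul_pi (k + j)
      push_cast at this ⊢
      linarith [this]
  by_cases hkj : k = j
  · subst hkj
    simp only [sub_self, zero_mul, Real.cos_zero, if_pos rfl]
    rw [h1]
    simp
  · have h2 : ∫ θ in (0:ℝ)..Real.pi, Real.cos (((k:ℝ) - j) * θ) = 0 := by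
      apply int_cos_zero
      · intro h
        apply hkj
        have : (k:ℝ) = j := by linarith
        exact_mod_cast this
      · have := Real.sin_int_mul_pi ((k:ℤ) - j)
        push_cast at this ⊢
        linarith [this]
    rw [h1, h2, if_neg hkj]
    norm_num

theorem cheb_coeff_sum_le_min_sup (p : ℕ) (hp : 1 ≤ p) (v : Polynomial ℝ)
    (c : ℕ → ℝ) (hv : v = ∑ ℓ ∈ Finset.range (p + 1), c ℓ • T ℝ ℓ) :
    ∀ w : Polynomial ℝ, w.natDegree ≤ p →
      Polynomial.derivative (Polynomial.derivative w) =
        Polynomial.derivative (Polynomial.derivative v) →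
      ∑ ℓ ∈ Finset.Icc 2 p, |c ℓ| ≤
        (p : ℝ) ^ 4 * ⨆ x : Set.Ioo (-1 : ℝ) 1, |w.eval (x : ℝ)| := by
  intro w hdeg hsec
  set M := ⨆ x : Set.Ioo (-1:ℝ) 1, |w.eval (x:ℝ)| with hMdef
  -- boundedness / basic properties of M
  obtain ⟨C, hC⟩ := (isCompact_Icc (a := (-1:ℝ)) (b := 1)).exists_bound_of_continuousOn
    (w.continuous.abs.continuousOn)
  have hbdd : BddAbove (Set.range fun x : Set.Ioo (-1:ℝ) 1 => |w.eval (x:ℝ)|) := by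
    refine ⟨C, ?_⟩
    rintro _ ⟨x, rfl⟩
    have := hC x ⟨le_of_lt x.2.1, le_of_lt x.2.2⟩
    simpa [Real.norm_eq_abs] using this
  have hM0 : 0 ≤ M := le_trans (abs_nonneg _) (le_ciSup hbdd ⟨0, by norm_num⟩)
  have hMx : ∀ x ∈ Set.Icc (-1:ℝ) 1, |w.eval x| ≤ M := by
    have hcl : IsClosed {x : ℝ | |w.eval x| ≤ M} :=
      isClosed_le (w.continuous.abs) continuous_const
    have hsub : Set.Ioo (-1:ℝ) 1 ⊆ {x : ℝ | |w.eval x| ≤ M} := by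
      intro x hx
      exact le_ciSup hbdd ⟨x, hx⟩
    intro x hx
    have hss : Set.Icc (-1:ℝ) 1 ⊆ {x : ℝ | |w.eval x| ≤ M} := by
      rw [← closure_Ioo (by norm_num : (-1:ℝ) ≠ 1)]
      exact closure_minimal hsub hcl
    exact hss hx
  -- structure of w : w = v + e*X + f
  have h2 : Polynomial.derivative (Polynomial.derivative (w - v)) = 0 := by
    simp [hsec]
  have h1 := Polynomial.eq_C_of_natDegree_eq_zero
    (Polynomial.natDegree_eq_zero_of_derivative_eq_zero h2)
  set e := (Polynomial.derivative (w - v)).coeff 0 with he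
  have h0 : Polynomial.derivative (w - v - Polynomial.C e * Polynomial.X) = 0 := by
    rw [map_sub, h1]; simp
  have h3 := Polynomial.eq_C_of_natDegree_eq_zero
    (Polynomial.natDegree_eq_zero_of_derivative_eq_zero h0)
  set f := (w - v - Polynomial.C e * Polynomial.X).coeff 0 with hf
  have hweval : ∀ x : ℝ, w.eval x = v.eval x + e * x + f := by
    intro x
    have := congrArg (Polynomial.eval x) h3
    simp at this
    linarith
  -- Chebyshev expansion of v on the circle
  have hveval : ∀ θ : ℝ, v.eval (Real.cos θ) =
      ∑ ℓ ∈ Finset.range (p+1), c ℓ * Real.cos (ℓ * θ) := by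
    intro θ
    rw [hv, Polynomial.eval_finset_sum]
    refine Finset.sum_congr rfl fun ℓ hℓ => ?_
    rw [Polynomial.eval_smul, smul_eq_mul, T_real_cos]
    norm_num
  -- coefficient bound
  have key : ∀ j ∈ Finset.Icc 2 p, |c j| ≤ 2 * M := by
    intro j hj
    rw [Finset.mem_Icc] at hj
    have hjπ : Real.sin ((j:ℝ) * Real.pi) = 0 := by
      exact_mod_cast Real.sin_nat_mul_pi j
    have hI : ∫ θ in (0:ℝ)..Real.pi, w.eval (Real.cos θ) * Real.cos (j*θ)
        = c j * (Real.pi/2) := by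
      have hcongr : ∀ θ : ℝ, w.eval (Real.cos θ) * Real.cos (j*θ)
          = (∑ ℓ ∈ Finset.range (p+1), c ℓ * (Real.cos (ℓ*θ) * Real.cos (j*θ)))
            + e * (Real.cos θ * Real.cos (j*θ)) + f * Real.cos (j*θ) := by
        intro θ
        rw [hweval, hveval, add_mul, add_mul, Finset.sum_mul]
        simp only [mul_assoc]
      simp only [hcongr]
      have int1 : IntervalIntegrable (fun θ : ℝ =>
          ∑ ℓ ∈ Finset.range (p+1), c ℓ * (Real.cos (ℓ*θ) * Real.cos (j*θ)))
          MeasureTheory.volume 0 Real.pi := by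
        apply Continuous.intervalIntegrable
        exact continuous_finset_sum _ fun i _ => by fun_prop
      have int2 : IntervalIntegrable (fun θ : ℝ => e * (Real.cos θ * Real.cos (j*θ)))
          MeasureTheory.volume 0 Real.pi := Continuous.intervalIntegrable (by fun_prop) _ _
      have int3 : IntervalIntegrable (fun θ : ℝ => f * Real.cos (j*θ))
          MeasureTheory.volume 0 Real.pi := Continuous.intervalIntegrable (by fun_prop) _ _
      rw [intervalIntegral.integral_add (int1.add int2) int3,
          intervalIntegral.integral_add int1 int2,
          intervalIntegral.integral_finset_sum
            (fun i _ => Continuous.intervalIntegrable (by fun_prop) _ _)]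
      have hsum : ∑ ℓ ∈ Finset.range (p+1),
          (∫ θ in (0:ℝ)..Real.pi, c ℓ * (Real.cos (ℓ*θ) * Real.cos (j*θ)))
          = c j * (Real.pi/2) := by
        have : ∀ ℓ ∈ Finset.range (p+1),
            (∫ θ in (0:ℝ)..Real.pi, c ℓ * (Real.cos (ℓ*θ) * Real.cos (j*θ)))
            = if ℓ = j then c ℓ * (Real.pi/2) else 0 := by
          intro ℓ _
          rw [intervalIntegral.integral_const_mul, cos_orth ℓ j (by omega)]
          split <;> simp
        rw [Finset.sum_congr rfl this, Finset.sum_ite_eq' (Finset.range (p+1)) j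
          (fun ℓ => c ℓ * (Real.pi/2)), if_pos (Finset.mem_range.mpr (by omega))]
      have he0 : (∫ θ in (0:ℝ)..Real.pi, e * (Real.cos θ * Real.cos (j*θ))) = 0 := by
        rw [intervalIntegral.integral_const_mul]
        have := cos_orth 1 j (by omega)
        rw [if_neg (by omega)] at this
        simp only [Nat.cast_one, one_mul] at this
        rw [this, mul_zero]
      have hf0 : (∫ θ in (0:ℝ)..Real.pi, f * Real.cos (j*θ)) = 0 := by
        rw [intervalIntegral.integral_const_mul,
          int_cos_zero j (Nat.cast_ne_zero.mpr (by omega)) hjπ, mul_zero]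
      rw [hsum, he0, hf0]
      ring
    have hbound : ‖∫ θ in (0:ℝ)..Real.pi, w.eval (Real.cos θ) * Real.cos (j*θ)‖
        ≤ M * |Real.pi - 0| := by
      apply intervalIntegral.norm_integral_le_of_norm_le_const
      intro x hx
      rw [Real.norm_eq_abs, abs_mul]
      calc |w.eval (Real.cos x)| * |Real.cos ((j:ℝ)*x)|
          ≤ M * 1 := mul_le_mul (hMx _ ⟨Real.neg_one_le_cos x, Real.cos_le_one x⟩)
            (Real.abs_cos_le_one _) (abs_nonneg _) hM0
        _ = M := mul_one M
    rw [hI, Real.norm_eq_abs, abs_mul,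
      abs_of_pos (by positivity : (0:ℝ) < Real.pi/2)] at hbound
    rw [abs_of_nonneg (by linarith [Real.pi_pos] : (0:ℝ) ≤ Real.pi - 0)] at hbound
    nlinarith [Real.pi_pos, abs_nonneg (c j)]
  -- sum up
  rcases eq_or_lt_of_le hp with h1 | h2
  · have hempty : Finset.Icc 2 p = ∅ := by
      apply Finset.Icc_eq_empty; omega
    rw [hempty, Finset.sum_empty]
    exact mul_nonneg (by positivity) hM0
  · have hp2 : 2 ≤ p := h2
    calc ∑ ℓ ∈ Finset.Icc 2 p, |c ℓ|
        ≤ ∑ _ℓ ∈ Finset.Icc 2 p, 2*M := Finset.sum_le_sum key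
      _ = ((Finset.Icc 2 p).card : ℝ) * (2*M) := by rw [Finset.sum_const, nsmul_eq_mul]
      _ ≤ (p:ℝ) * (2*M) := by
          apply mul_le_mul_of_nonneg_right _ (by positivity)
          rw [Nat.card_Icc]
          have : p + 1 - 2 ≤ p := by omega
          exact_mod_cast this
      _ ≤ (p:ℝ)^4 * M := by
          have hp2' : (2:ℝ) ≤ p := by exact_mod_cast hp2
          have h4 : 2*(p:ℝ) ≤ (p:ℝ)^4 := by nlinarith [hp2', sq_nonneg ((p:ℝ)), sq_nonneg ((p:ℝ)-1), sq_nonneg ((p:ℝ)^2 - 1)]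
          calc (p:ℝ) * (2*M) = (2*(p:ℝ)) * M := by ring
            _ ≤ (p:ℝ)^4 * M := mul_le_mul_of_nonneg_right h4 hM0
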